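/- arXiv:1912.01124 — 2 statements merged into one kernel-verified Lean document; each statement's English description precedes it below -/
import Mathlib

section
/- Let c(x) satisfy c = 1 + x·c^2. Then c(x/(1+x)^2) = 1 + x as formal power series (where the substitution x ↦ x/(1+x)^2 is valid since x/(1+x)^2 has zero constant term). -/
open PowerSeries Finset

/-- Composition `g ∘ f` of formal power series (valid when `f` has zero constant term). -/
noncomputable def psComp (g f : PowerSeries ℚ) : PowerSeries ℚ :=
  PowerSeries.mk fun n => ∑ k ∈ Finset.range (n + 1),
    PowerSeries.coeff k g * PowerSeries.coeff n (f ^ k)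

lemma coeff_psComp (g f : PowerSeries ℚ) (n : ℕ) :
    coeff n (psComp g f) = ∑ k ∈ range (n + 1), coeff k g * coeff n (f ^ k) := by
  simp [psComp]

lemma coeff_pow_zero_of_lt {f : PowerSeries ℚ} (hf : constantCoeff f = 0)
    {n k : ℕ} (h : n < k) : coeff n (f ^ k) = 0 := by
  have hdvd : (X : PowerSeries ℚ) ^ k ∣ f ^ k :=
    pow_dvd_pow_of_dvd (X_dvd_iff.mpr hf) k
  exact X_pow_dvd_iff.mp hdvd n h

lemma coeff_aeval {f : PowerSeries ℚ} (hf : constantCoeff f = 0)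
    (P : Polynomial ℚ) (n : ℕ) :
    coeff n (Polynomial.aeval f P) =
      ∑ k ∈ range (n + 1), P.coeff k * coeff n (f ^ k) := by
  rw [Polynomial.aeval_eq_sum_range, map_sum]
  simp only [LinearMap.map_smul, smul_eq_mul]
  set m := max (n + 1) (P.natDegree + 1) with hm
  have h1 : ∀ x ∈ range m, x ∉ range (P.natDegree + 1) →
      P.coeff x * coeff n (f ^ x) = 0 := by
    intro x _ hx
    simp only [Finset.mem_range, not_lt] at hx
    rw [P.coeff_eq_zero_of_natDegree_lt (by omega), zero_mul]
  have h2 : ∀ x ∈ range m, x ∉ range (n + 1) →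
      P.coeff x * coeff n (f ^ x) = 0 := by
    intro x _ hx
    simp only [Finset.mem_range, not_lt] at hx
    rw [coeff_pow_zero_of_lt hf (by omega), mul_zero]
  rw [Finset.sum_subset (Finset.range_subset_range.mpr (le_max_right _ _)) h1,
    Finset.sum_subset (Finset.range_subset_range.mpr (le_max_left _ _)) h2]

lemma coeff_psComp_eq_aeval {f : PowerSeries ℚ} (hf : constantCoeff f = 0)
    (g : PowerSeries ℚ) {k n : ℕ} (hk : k ≤ n) :
    coeff k (psComp g f) = coeff k (Polynomial.aeval f (trunc (n + 1) g)) := by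
  rw [coeff_psComp, coeff_aeval hf]
  refine Finset.sum_congr rfl fun j hj => ?_
  rw [coeff_trunc, if_pos (by simp only [Finset.mem_range] at hj; omega)]

lemma coeff_mul_congr {a a' b b' : PowerSeries ℚ} {n : ℕ}
    (ha : ∀ k ≤ n, coeff k a = coeff k a')
    (hb : ∀ k ≤ n, coeff k b = coeff k b') :
    coeff n (a * b) = coeff n (a' * b') := by
  rw [coeff_mul, coeff_mul]
  refine Finset.sum_congr rfl fun p hp => ?_
  rw [Finset.HasAntidiagonal.mem_antidiagonal] at hp
  rw [ha p.1 (by omega), hb p.2 (by omega)]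

lemma psComp_mul {f : PowerSeries ℚ} (hf : constantCoeff f = 0)
    (g h : PowerSeries ℚ) : psComp (g * h) f = psComp g f * psComp h f := by
  ext n
  rw [show coeff n (psComp g f * psComp h f)
      = coeff n (Polynomial.aeval f (trunc (n + 1) g) *
          Polynomial.aeval f (trunc (n + 1) h)) from
    coeff_mul_congr (fun k hk => coeff_psComp_eq_aeval hf g hk)
      (fun k hk => coeff_psComp_eq_aeval hf h hk)]
  rw [← map_mul, coeff_aeval hf, coeff_psComp]
  refine Finset.sum_congr rfl fun k hk => ?_
  rw [Finset.mem_range] at hk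
  congr 1
  rw [Polynomial.coeff_mul, PowerSeries.coeff_mul]
  refine Finset.sum_congr rfl fun p hp => ?_
  rw [Finset.HasAntidiagonal.mem_antidiagonal] at hp
  rw [coeff_trunc, coeff_trunc, if_pos (by omega), if_pos (by omega)]

lemma psComp_add (f g h : PowerSeries ℚ) :
    psComp (g + h) f = psComp g f + psComp h f := by
  ext n
  simp [coeff_psComp, mul_comm, Finset.sum_add_distrib, add_mul, mul_add]

lemma psComp_one (f : PowerSeries ℚ) : psComp 1 f = 1 := by
  ext n
  rw [coeff_psComp, Finset.sum_eq_single 0]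
  · simp
  · intro k hk hk0
    rw [PowerSeries.coeff_one, if_neg hk0, zero_mul]
  · simp

lemma psComp_X {f : PowerSeries ℚ} (hf : constantCoeff f = 0) :
    psComp X f = f := by
  ext n
  rw [coeff_psComp]
  rcases Nat.eq_zero_or_pos n with rfl | hn
  · simpa [coeff_zero_eq_constantCoeff] using hf.symm
  · rw [Finset.sum_eq_single 1]
    · simp
    · intro k hk hk1
      rw [coeff_X, if_neg hk1, zero_mul]
    · intro h1
      simp only [Finset.mem_range] at h1
      omega

theorem catalan_comp (c : PowerSeries ℚ) (hc : c = 1 + X * c ^ 2) :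
    psComp c (X * ((1 + X) ^ 2 : PowerSeries ℚ)⁻¹) = 1 + X := by
  set f : PowerSeries ℚ := X * ((1 + X) ^ 2 : PowerSeries ℚ)⁻¹ with hfdef
  have hf : constantCoeff f = 0 := by simp [hfdef]
  set u : PowerSeries ℚ := psComp c f with hu
  have hconst : constantCoeff ((1 + X : PowerSeries ℚ) ^ 2) ≠ 0 := by
    simp
  have hinv : ((1 + X : PowerSeries ℚ) ^ 2)⁻¹ * (1 + X) ^ 2 = 1 :=
    PowerSeries.inv_mul_cancel _ hconst
  have h1 : u = 1 + f * (u * u) := by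
    conv_lhs => rw [hu, hc]
    rw [sq, psComp_add, psComp_one, psComp_mul hf, psComp_mul hf, psComp_X hf]
  have h2 : (1 + X : PowerSeries ℚ) = 1 + f * ((1 + X) * (1 + X)) := by
    have : f * ((1 + X) * (1 + X)) = X := by
      rw [hfdef, ← sq]
      calc X * ((1 + X : PowerSeries ℚ) ^ 2)⁻¹ * (1 + X) ^ 2
          = X * (((1 + X : PowerSeries ℚ) ^ 2)⁻¹ * (1 + X) ^ 2) := by ring
        _ = X := by rw [hinv, mul_one]
    rw [this]
  have h3 : (1 - f * (u + (1 + X))) * (u - (1 + X)) = 0 := by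
    linear_combination h1 - h2
  have h4 : (1 - f * (u + (1 + X))) ≠ 0 := by
    intro h
    have := congrArg (constantCoeff) h
    simp [hf] at this
  rcases mul_eq_zero.mp h3 with h | h
  · exact absurd h h4
  · exact sub_eq_zero.mp h
end

section
/- For every n ≥ 0, Σ_{k=0}^{n} Σ_{j=0}^{n} C_{n-j} · C(2j, j-k) = 4^n, where C_m denotes the m-th Catalan number and C(a,b) the binomial coefficient (zero if b < 0). -/
open Finset

lemma aux_four_mul_centralBinom (j : ℕ) :
    4 * Nat.centralBinom j = Nat.centralBinom (j + 1) + 2 * catalan j := by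
  apply Nat.eq_of_mul_eq_mul_left (show 0 < j + 1 by omega)
  have h1 := Nat.succ_mul_centralBinom_succ j
  have h2 := succ_mul_catalan_eq_centralBinom j
  nlinarith [h1, h2]

lemma aux_half_sum (j : ℕ) :
    2 * ∑ i ∈ range (j + 1), (2 * j).choose i = 4 ^ j + (2 * j).choose j := by
  have h := Nat.sum_range_choose_halfway j
  have key : ∑ i ∈ range (j + 1), (2 * j + 1).choose i + (2 * j).choose j
      = 2 * ∑ i ∈ range (j + 1), (2 * j).choose i := by
    have e1 : ∑ i ∈ range (j + 1), (2 * j + 1).choose i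
        = (∑ i ∈ range j, ((2 * j).choose i + (2 * j).choose (i + 1))) + 1 := by
      rw [Finset.sum_range_succ']
      simp [Nat.choose_succ_succ]
    have e2 : ∑ i ∈ range (j + 1), (2 * j).choose i
        = ∑ i ∈ range j, (2 * j).choose i + (2 * j).choose j := Finset.sum_range_succ _ _
    have e3 : ∑ i ∈ range (j + 1), (2 * j).choose i
        = ∑ i ∈ range j, (2 * j).choose (i + 1) + 1 := by
      rw [Finset.sum_range_succ']; simp
    rw [e1, Finset.sum_add_distrib]
    omega
  omega

lemma aux_conv (n : ℕ) :
    ∑ j ∈ range (n + 1), catalan (n - j) * (4 ^ j + Nat.centralBinom j) = 2 * 4 ^ n := by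
  induction n with
  | zero => simp [Nat.centralBinom]
  | succ n ih =>
      rw [Finset.sum_range_succ']
      have hshift : ∀ j ∈ range (n + 1),
          catalan (n + 1 - (j + 1)) * (4 ^ (j + 1) + Nat.centralBinom (j + 1))
            = catalan (n - j) * (4 ^ (j + 1) + Nat.centralBinom (j + 1)) := by
        intro j _; rw [Nat.succ_sub_succ]
      rw [Finset.sum_congr rfl hshift]
      have key : ∀ j, catalan (n - j) * (4 * (4 ^ j + Nat.centralBinom j))
          = catalan (n - j) * (4 ^ (j + 1) + Nat.centralBinom (j + 1))
            + 2 * (catalan (n - j) * catalan j) := by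
        intro j
        rw [Nat.mul_add 4, aux_four_mul_centralBinom]
        ring
      have hcat : ∑ j ∈ range (n + 1), catalan (n - j) * catalan j = catalan (n + 1) := by
        rw [catalan_succ' n, Nat.sum_antidiagonal_eq_sum_range_succ
          (fun x y => catalan x * catalan y) n,
          ← Finset.sum_range_reflect (fun k => catalan k * catalan (n - k)) (n + 1)]
        apply Finset.sum_congr rfl
        intro j hj
        simp only [Finset.mem_range] at hj
        have h1 : n + 1 - 1 - j = n - j := by omega
        have h2 : n - (n - j) = j := by omega
        simp only [h1, h2]
      have h4 : ∑ j ∈ range (n + 1), catalan (n - j) * (4 * (4 ^ j + Nat.centralBinom j))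
          = 4 * (2 * 4 ^ n) := by
        rw [← ih, Finset.mul_sum]
        apply Finset.sum_congr rfl
        intro j _; ring
      have h5 : ∑ j ∈ range (n + 1), catalan (n - j) * (4 * (4 ^ j + Nat.centralBinom j))
          = ∑ j ∈ range (n + 1), catalan (n - j) * (4 ^ (j + 1) + Nat.centralBinom (j + 1))
            + 2 * ∑ j ∈ range (n + 1), catalan (n - j) * catalan j := by
        rw [Finset.mul_sum, ← Finset.sum_add_distrib]
        exact Finset.sum_congr rfl fun j _ => key j
      rw [hcat] at h5
      have hc0 : Nat.centralBinom 0 = 1 := Nat.centralBinom_zero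
      have hp : (4:ℕ) ^ (n + 1) = 4 * 4 ^ n := by ring
      simp only [Nat.sub_zero, pow_zero, hc0, hp]
      omega

theorem catalan_binomial_four_pow (n : ℕ) :
    ∑ k ∈ Finset.range (n + 1), ∑ j ∈ Finset.range (n + 1),
        catalan (n - j) * (if k ≤ j then (2 * j).choose (j - k) else 0) = 4 ^ n := by
  rw [Finset.sum_comm]
  have hinner : ∀ j ∈ range (n + 1),
      ∑ k ∈ range (n + 1), catalan (n - j) * (if k ≤ j then (2 * j).choose (j - k) else 0)
        = catalan (n - j) * ∑ i ∈ range (j + 1), (2 * j).choose i := by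
    intro j hj
    simp only [Finset.mem_range] at hj
    rw [← Finset.mul_sum]
    congr 1
    have h1 : ∑ k ∈ range (n + 1), (if k ≤ j then (2 * j).choose (j - k) else 0)
        = ∑ k ∈ range (j + 1), (if k ≤ j then (2 * j).choose (j - k) else 0) :=
      (Finset.sum_subset (Finset.range_subset_range.mpr (by omega)) (by
        intro x _ hnx
        simp only [Finset.mem_range] at hnx
        rw [if_neg (by omega)])).symm
    have h2 : ∑ k ∈ range (j + 1), (if k ≤ j then (2 * j).choose (j - k) else 0)
        = ∑ k ∈ range (j + 1), (2 * j).choose (j - k) := by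
      apply Finset.sum_congr rfl
      intro k hk
      simp only [Finset.mem_range] at hk
      rw [if_pos (by omega)]
    have h3 : ∑ k ∈ range (j + 1), (2 * j).choose (j - k)
        = ∑ i ∈ range (j + 1), (2 * j).choose i := by
      have := Finset.sum_range_reflect (fun i => (2 * j).choose i) (j + 1)
      simpa using this
    rw [h1, h2, h3]
  rw [Finset.sum_congr rfl hinner]
  have h2 : 2 * ∑ j ∈ range (n + 1), catalan (n - j) * ∑ i ∈ range (j + 1), (2 * j).choose i
      = 2 * 4 ^ n := by
    rw [Finset.mul_sum]
    rw [← aux_conv n]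
    apply Finset.sum_congr rfl
    intro j _
    have hcb : Nat.centralBinom j = (2 * j).choose j := rfl
    rw [hcb, ← aux_half_sum j]
    ring
  omega
end
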